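/- For all x > 0, the Gamma function satisfies Γ(x + 1/2) ≤ (x/e)^x · √(2π). -/

import Mathlib

open Real Filter Topology Nat intervalIntegral

lemma keyA {x : ℝ} (hx : 0 < x) :
    (x+1) * Real.log (x+1) - x * Real.log x ≤ 1 + Real.log (x + 1/2) := by
  have ha : (0:ℝ) < x + 1/2 := by linarith
  have hx1 : (0:ℝ) < x + 1 := by linarith
  have hint : ∫ t in x..(x+1), Real.log t
      = (x+1)*Real.log (x+1) - x*Real.log x - (x+1) + x :=
    integral_log
  have hmono : ∫ t in x..(x+1), Real.log t
      ≤ ∫ t in x..(x+1), (Real.log (x+1/2) + (t - (x+1/2))/(x+1/2)) := by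
    apply intervalIntegral.integral_mono_on (by linarith)
    · apply intervalIntegrable_log
      intro h
      have := h.1
      simp only [min_def] at this
      split_ifs at this <;> linarith
    · exact (Continuous.intervalIntegrable (by continuity) _ _)
    · intro t ht
      rw [Set.mem_Icc] at ht
      have htpos : 0 < t := lt_of_lt_of_le hx ht.1
      have := Real.log_le_sub_one_of_pos (show 0 < t / (x+1/2) by positivity)
      rw [Real.log_div htpos.ne' ha.ne'] at this
      have : Real.log t - Real.log (x+1/2) ≤ (t - (x+1/2))/(x+1/2) := by
        rw [sub_div, div_self ha.ne']; linarith
      linarith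
  have hval : ∫ t in x..(x+1), (Real.log (x+1/2) + (t - (x+1/2))/(x+1/2))
      = Real.log (x+1/2) := by
    have h1 : (fun t => Real.log (x+1/2) + (t - (x+1/2))/(x+1/2))
        = fun t => (Real.log (x+1/2) - 1) + t * (x+1/2)⁻¹ := by
      funext t; field_simp; ring
    rw [h1]
    rw [intervalIntegral.integral_add (f := fun _ => Real.log (x+1/2) - 1) (g := fun t => t * (x+1/2)⁻¹) (intervalIntegrable_const) ((continuous_id'.mul continuous_const).intervalIntegrable _ _)]
    rw [intervalIntegral.integral_const, intervalIntegral.integral_mul_const,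
      integral_id]
    field_simp
    ring
  linarith

noncomputable def hfun (x : ℝ) : ℝ :=
  Real.log (Real.Gamma (x + 1/2)) - (x * Real.log x - x)

lemma hfun_step {x : ℝ} (hx : 0 < x) : hfun x ≤ hfun (x+1) := by
  have ha : (0:ℝ) < x + 1/2 := by linarith
  have hΓ : 0 < Real.Gamma (x+1/2) := Real.Gamma_pos_of_pos ha
  have hg : Real.Gamma (x + 1 + 1/2) = (x+1/2) * Real.Gamma (x+1/2) := by
    rw [show x + 1 + 1/2 = (x + 1/2) + 1 by ring, Real.Gamma_add_one ha.ne']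
  have hA := keyA hx
  simp only [hfun, hg, Real.log_mul ha.ne' hΓ.ne']
  linarith

lemma hfun_le {x : ℝ} (hx : 0 < x) (n : ℕ) : hfun x ≤ hfun (x + n) := by
  induction n with
  | zero => simp
  | succ n ih =>
    have : hfun (x + n) ≤ hfun (x + n + 1) := hfun_step (by positivity)
    push_cast
    refine ih.trans (le_of_le_of_eq this (by ring_nf))

lemma gamma_nat_half (n : ℕ) :
    Real.Gamma (((n+1:ℕ):ℝ) + 1/2)
      = Real.sqrt π * (2*(n+1))! / (4^(n+1) * (n+1)!) := by
  set m : ℕ := n + 1 with hm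
  have h := Real.Gamma_mul_Gamma_add_half (m : ℝ)
  have h1 : Real.Gamma (m : ℝ) = n ! := by
    rw [show ((m:ℕ):ℝ) = (n:ℝ) + 1 by push_cast [hm]; ring, Real.Gamma_nat_eq_factorial]
  have h2 : Real.Gamma (2 * (m:ℝ)) = (2*n+1)! := by
    rw [show 2*((m:ℕ):ℝ) = ((2*n+1:ℕ):ℝ) + 1 by push_cast [hm]; ring,
      Real.Gamma_nat_eq_factorial]
  have h3 : (2:ℝ) ^ (1 - 2*(m:ℝ)) = 2 / 4^m := by
    rw [show (1 - 2*(m:ℝ)) = 1 - ((2*m:ℕ):ℝ) by push_cast; ring,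
      Real.rpow_sub two_pos, Real.rpow_one, Real.rpow_natCast]
    norm_num [pow_mul]
  rw [h1, h2, h3] at h
  have hfac : ((2*(n+1))! : ℝ) = (2*n+2) * (2*n+1)! := by
    rw [show 2*(n+1) = (2*n+1)+1 by ring, Nat.factorial_succ]
    push_cast; ring
  have hfac2 : ((n+1)! : ℝ) = (n+1) * n ! := by
    rw [Nat.factorial_succ]; push_cast; ring
  have hn0 : (n ! : ℝ) ≠ 0 := by positivity
  have h4 : (0:ℝ) < 4 ^ m := by positivity
  field_simp [hm] at h ⊢
  rw [hfac, hfac2]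
  push_cast
  linear_combination ((n:ℝ)+1) * h

lemma gamma_stirling (n : ℕ) :
    Real.Gamma (((n+1:ℕ):ℝ) + 1/2)
      = Real.sqrt (2*π) * (Stirling.stirlingSeq (2*(n+1)) / Stirling.stirlingSeq (n+1))
        * (((n+1:ℕ):ℝ)/Real.exp 1)^(n+1) := by
  set m : ℕ := n + 1 with hm
  have hm0 : (0:ℝ) < m := by positivity
  have hd1 : (0:ℝ) < Real.sqrt (2*(2*m:ℕ)) * (((2*m:ℕ):ℝ)/Real.exp 1)^(2*m) := by
    have : (0:ℝ) < ((2*m:ℕ):ℝ) := by positivity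
    positivity
  have hd2 : (0:ℝ) < Real.sqrt (2*(m:ℕ)) * (((m:ℕ):ℝ)/Real.exp 1)^m := by positivity
  have e1 : ((2*m)! : ℝ)
      = Stirling.stirlingSeq (2*m) * (Real.sqrt (2*(2*m:ℕ)) * (((2*m:ℕ):ℝ)/Real.exp 1)^(2*m)) := by
    rw [Stirling.stirlingSeq, div_mul_cancel₀ _ hd1.ne']
  have e2 : ((m)! : ℝ)
      = Stirling.stirlingSeq m * (Real.sqrt (2*(m:ℕ)) * (((m:ℕ):ℝ)/Real.exp 1)^m) := by
    rw [Stirling.stirlingSeq, div_mul_cancel₀ _ hd2.ne']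
  have hs : (0:ℝ) < Stirling.stirlingSeq m := by
    rw [hm]; exact Stirling.stirlingSeq'_pos n
  have sq1 : Real.sqrt (2*(2*m:ℕ)) = Real.sqrt 2 * Real.sqrt (2*(m:ℕ)) := by
    rw [← Real.sqrt_mul (by norm_num : (0:ℝ) ≤ 2)]
    push_cast; ring_nf
  have sq2 : Real.sqrt (2*π) = Real.sqrt 2 * Real.sqrt π := by
    rw [← Real.sqrt_mul (by norm_num : (0:ℝ) ≤ 2)]
  have pw : (((2*m:ℕ):ℝ)/Real.exp 1)^(2*m) = 4^m * (((m:ℕ):ℝ)/Real.exp 1)^m * (((m:ℕ):ℝ)/Real.exp 1)^m := by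
    rw [Nat.cast_mul, Nat.cast_ofNat,
      show (2:ℝ)*(m:ℝ)/Real.exp 1 = 2 * ((m:ℝ)/Real.exp 1) by ring, mul_pow, pow_mul]
    norm_num; ring
  rw [gamma_nat_half, ← hm, e1, e2, sq1, sq2, pw]
  have h2m : (0:ℝ) < Real.sqrt (2*(m:ℕ)) := by positivity
  have hme : (0:ℝ) < ((m:ℕ):ℝ)/Real.exp 1 := by positivity
  field_simp

lemma sqrt2pi_pos : (0:ℝ) < Real.sqrt (2*π) := Real.sqrt_pos.2 (by positivity)

lemma hfun_nat (n : ℕ) : hfun ((n+1:ℕ):ℝ)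
    = Real.log (Real.sqrt (2*π)) + Real.log (Stirling.stirlingSeq (2*(n+1)))
      - Real.log (Stirling.stirlingSeq (n+1)) := by
  have hs2 : 0 < Stirling.stirlingSeq (2*(n+1)) := by
    rw [show 2*(n+1) = (2*n+1)+1 by ring]; exact Stirling.stirlingSeq'_pos _
  have hs1 : 0 < Stirling.stirlingSeq (n+1) := Stirling.stirlingSeq'_pos _
  have hm : (0:ℝ) < ((n+1:ℕ):ℝ) := by positivity
  have hme : (0:ℝ) < ((n+1:ℕ):ℝ)/Real.exp 1 := by positivity
  unfold hfun
  rw [gamma_stirling n,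
    Real.log_mul (by positivity) (by positivity),
    Real.log_mul sqrt2pi_pos.ne' (by positivity),
    Real.log_div hs2.ne' hs1.ne', Real.log_pow,
    Real.log_div hm.ne' (Real.exp_pos 1).ne', Real.log_exp]
  push_cast
  ring

lemma hfun_nat_tendsto :
    Tendsto (fun n : ℕ => hfun ((n+1:ℕ):ℝ)) atTop (𝓝 (Real.log (Real.sqrt (2*π)))) := by
  have hπ : Real.sqrt π ≠ 0 := by positivity
  have t1 : Tendsto (fun n : ℕ => 2*(n+1)) atTop atTop :=
    (strictMono_nat_of_lt_succ (fun n => by omega)).tendsto_atTop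
  have t2 : Tendsto (fun n : ℕ => n+1) atTop atTop :=
    (strictMono_nat_of_lt_succ (fun n => by omega)).tendsto_atTop
  have h1 : Tendsto (fun n : ℕ => Real.log (Stirling.stirlingSeq (2*(n+1)))) atTop
      (𝓝 (Real.log (Real.sqrt π))) :=
    (Stirling.tendsto_stirlingSeq_sqrt_pi.comp t1).log hπ
  have h2 : Tendsto (fun n : ℕ => Real.log (Stirling.stirlingSeq (n+1))) atTop
      (𝓝 (Real.log (Real.sqrt π))) :=
    (Stirling.tendsto_stirlingSeq_sqrt_pi.comp t2).log hπ
  have := (((tendsto_const_nhds : Tendsto (fun _ : ℕ => Real.log (Real.sqrt (2*π))) atTop (𝓝 (Real.log (Real.sqrt (2*π))))).add h1).sub h2)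
  simp only [add_sub_cancel_right] at this
  exact Tendsto.congr (fun n => (hfun_nat n).symm) this

lemma interp {t : ℝ} (ht0 : 0 ≤ t) (ht1 : t < 1) (m : ℕ) (hm : 1 ≤ m) :
    hfun ((m:ℝ) + t) ≤ hfun (m:ℝ) + 1/(2*(m:ℝ)) := by
  have hm0 : (1:ℝ) ≤ (m:ℝ) := by exact_mod_cast hm
  have ha : (0:ℝ) < (m:ℝ) + 1/2 := by linarith
  have hb : (0:ℝ) < (m:ℝ) + 3/2 := by linarith
  have hmpos : (0:ℝ) < (m:ℝ) := by linarith
  have hΓa : 0 < Real.Gamma ((m:ℝ) + 1/2) := Real.Gamma_pos_of_pos ha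
  -- log-convexity
  have hconv := Real.convexOn_log_Gamma.2 (Set.mem_Ioi.2 ha) (Set.mem_Ioi.2 hb)
    (by linarith : (0:ℝ) ≤ 1 - t) ht0 (by ring)
  simp only [smul_eq_mul, Function.comp_apply] at hconv
  have harg : (1-t) * ((m:ℝ) + 1/2) + t * ((m:ℝ) + 3/2) = ((m:ℝ) + t) + 1/2 := by ring
  rw [harg] at hconv
  have hΓb : Real.Gamma ((m:ℝ) + 3/2) = ((m:ℝ)+1/2) * Real.Gamma ((m:ℝ)+1/2) := by
    rw [show (m:ℝ) + 3/2 = ((m:ℝ) + 1/2) + 1 by ring, Real.Gamma_add_one ha.ne']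
  rw [hΓb, Real.log_mul ha.ne' hΓa.ne'] at hconv
  -- G bound : (m+t) log (m+t) - (m+t) ≥ m log m - m + t log m
  have hGb : (m:ℝ) * Real.log m - m + t * Real.log m
      ≤ ((m:ℝ)+t) * Real.log ((m:ℝ)+t) - ((m:ℝ)+t) := by
    have hlog : Real.log (((m:ℝ)+t)/(m:ℝ)) ≥ 1 - (m:ℝ)/((m:ℝ)+t) :=
      by simpa [inv_div] using Real.one_sub_inv_le_log_of_pos (by positivity : (0:ℝ) < ((m:ℝ)+t)/(m:ℝ))
    rw [Real.log_div (by linarith) hmpos.ne'] at hlog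
    have h1 : ((m:ℝ)+t) * (Real.log ((m:ℝ)+t) - Real.log m) ≥ t := by
      have := mul_le_mul_of_nonneg_left hlog (by linarith : (0:ℝ) ≤ (m:ℝ)+t)
      have hne : ((m:ℝ)+t) ≠ 0 := by linarith
      calc t = ((m:ℝ)+t) * (1 - (m:ℝ)/((m:ℝ)+t)) := by field_simp; ring
        _ ≤ _ := this
    nlinarith [h1]
  -- log(m+1/2) ≤ log m + 1/(2m)
  have hla : Real.log ((m:ℝ)+1/2) ≤ Real.log m + 1/(2*(m:ℝ)) := by
    have h5 := Real.log_le_sub_one_of_pos (by positivity : (0:ℝ) < ((m:ℝ)+1/2)/(m:ℝ))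
    rw [Real.log_div ha.ne' hmpos.ne'] at h5
    have h6 : ((m:ℝ)+1/2)/(m:ℝ) - 1 = 1/(2*(m:ℝ)) := by field_simp; ring
    linarith
  have hlm : Real.log (m:ℝ) ≤ Real.log ((m:ℝ)+1/2) :=
    Real.log_le_log hmpos (by linarith)
  -- assemble
  have ht' : t * Real.log ((m:ℝ)+1/2) ≤ t * Real.log m + 1/(2*(m:ℝ)) := by
    nlinarith [mul_le_mul_of_nonneg_left hla ht0, mul_le_one₀ (le_refl (1:ℝ)) ht0 ht1.le]
  simp only [hfun]
  nlinarith [hconv, hGb, ht']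



theorem gamma_half_shift_bound (x : ℝ) (hx : 0 < x) :
    Real.Gamma (x + 1/2) ≤ (x / Real.exp 1) ^ x * Real.sqrt (2 * Real.pi) := by
  set k := ⌊x⌋₊ with hkdef
  have hk : (k:ℝ) ≤ x := Nat.floor_le hx.le
  have hk1 : x < k + 1 := Nat.lt_floor_add_one x
  have key : ∀ n : ℕ, hfun x ≤ hfun ((k+n+1 : ℕ):ℝ) + 1/(2*((k+n+1:ℕ):ℝ)) := by
    intro n
    have h1 : hfun x ≤ hfun (x + ((n+1 : ℕ):ℝ)) := hfun_le hx (n+1)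
    have h2 : x + ((n+1 : ℕ):ℝ) = ((k+n+1 : ℕ):ℝ) + (x - k) := by push_cast; ring
    rw [h2] at h1
    exact h1.trans (interp (by linarith) (by linarith) (k+n+1) (by omega))
  have hlim : Tendsto (fun n : ℕ => hfun ((k+n+1:ℕ):ℝ) + 1/(2*((k+n+1:ℕ):ℝ))) atTop
      (𝓝 (Real.log (Real.sqrt (2*π)))) := by
    have hshift : Tendsto (fun n : ℕ => n + k) atTop atTop := tendsto_add_atTop_nat k
    have A := hfun_nat_tendsto.comp hshift
    have hB : Tendsto (fun n : ℕ => 2*((n+1:ℕ):ℝ)) atTop atTop := by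
      apply Tendsto.const_mul_atTop two_pos
      exact tendsto_natCast_atTop_atTop.comp ((strictMono_nat_of_lt_succ (fun n => by omega)).tendsto_atTop)
    have B : Tendsto (fun n : ℕ => 1/(2*((n+1:ℕ):ℝ))) atTop (𝓝 0) :=
      (tendsto_inv_atTop_zero.comp hB).congr (fun n => by simp [Function.comp, one_div])
    have B' := B.comp hshift
    have C := A.add B'
    rw [add_zero] at C
    refine C.congr (fun n => ?_)
    have e : n + k + 1 = k + n + 1 := by omega
    simp only [Function.comp_apply, e]
  have hfx : hfun x ≤ Real.log (Real.sqrt (2*π)) := ge_of_tendsto' hlim key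
  have hΓ : 0 < Real.Gamma (x + 1/2) := Real.Gamma_pos_of_pos (by linarith)
  have hfx' : Real.log (Real.Gamma (x+1/2)) ≤ x*Real.log x - x + Real.log (Real.sqrt (2*π)) := by
    simp only [hfun] at hfx; linarith
  calc Real.Gamma (x+1/2) = Real.exp (Real.log (Real.Gamma (x+1/2))) := (Real.exp_log hΓ).symm
    _ ≤ Real.exp (x*Real.log x - x + Real.log (Real.sqrt (2*π))) := Real.exp_le_exp.2 hfx'
    _ = (x / Real.exp 1) ^ x * Real.sqrt (2*π) := by
        rw [Real.exp_add, Real.exp_log sqrt2pi_pos]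
        congr 1
        rw [Real.rpow_def_of_pos (by positivity : 0 < x / Real.exp 1),
          Real.log_div hx.ne' (Real.exp_pos 1).ne', Real.log_exp]
        ring_nf
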